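/- For every integer L ≥ 1, every K ∈ {1,…,L} and every ε > 0, the smoothed top-sum function topsum_{K,ε} : ℝ^L → ℝ defined by topsum_{K,ε}(s) = E[topsum_K(s + εZ)] is well defined (the integrand is integrable for every s) and is √K-Lipschitz with respect to the Euclidean norm. -/

import Mathlib

open MeasureTheory ProbabilityTheory

/-- The list of coordinates of `s : ℝ^L` sorted in decreasing order. -/
noncomputable def descSort {L : ℕ} (s : Fin L → ℝ) : List ℝ :=
  (Multiset.sort (Multiset.map s Finset.univ.val) (· ≤ ·)).reverse

/-- `kthLargest K s` is the `K`-th largest coordinate of `s` (1-indexed), i.e. `s_(K)`. -/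
noncomputable def kthLargest {L : ℕ} (K : ℕ) (s : Fin L → ℝ) : ℝ :=
  (descSort s).getD (K - 1) 0

/-- `topsum K s` is the sum of the `K` largest coordinates of `s`,
with the convention `topsum 0 s = 0`. -/
noncomputable def topsum {L : ℕ} (K : ℕ) (s : Fin L → ℝ) : ℝ :=
  ((descSort s).take K).sum

/-- The standard Gaussian measure `N(0, Id_L)` on `ℝ^L`:
the coordinates are i.i.d. standard normal random variables. -/
noncomputable def stdGaussian (L : ℕ) : Measure (EuclideanSpace ℝ (Fin L)) :=
  (Measure.pi (fun _ : Fin L => gaussianReal 0 1)).map (MeasurableEquiv.toLp 2 (Fin L → ℝ))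

/-- The smoothed top-sum `topsumSm K ε s = E[topsum K (s + ε Z)]`, `Z ∼ N(0, Id_L)`. -/
noncomputable def topsumSm {L : ℕ} (K : ℕ) (ε : ℝ) (s : EuclideanSpace ℝ (Fin L)) : ℝ :=
  ∫ z, topsum K (s + ε • z) ∂(stdGaussian L)

/-- The smoothed top-K operator `topSm K ε s = topsumSm K ε s - topsumSm (K-1) ε s`. -/
noncomputable def topSm {L : ℕ} (K : ℕ) (ε : ℝ) (s : EuclideanSpace ℝ (Fin L)) : ℝ :=
  topsumSm K ε s - topsumSm (K - 1) ε s

/-- The 0/1 vector whose entries equal 1 exactly at the `K` coordinates carrying the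
`K` largest values of `v` (well defined when the `K`-th and `(K+1)`-th largest values
of `v` are distinct). -/
noncomputable def argtops {L : ℕ} (K : ℕ) (v : Fin L → ℝ) : Fin L → ℝ :=
  fun i => if kthLargest K v ≤ v i then 1 else 0

/-! ### Auxiliary lemmas -/

lemma descSort_eq_ofFn {L : ℕ} (s : Fin L → ℝ) :
    Multiset.sort (Multiset.map s Finset.univ.val) (· ≤ ·) = List.ofFn (s ∘ Tuple.sort s) := by
  refine List.Perm.eq_of_pairwise' (r := (· ≤ ·)) ?_ ?_ ?_
  rotate_left 2
  · rw [← Multiset.coe_eq_coe, Multiset.sort_eq, List.ofFn_eq_map, ← Multiset.map_coe]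
    have h2 : Multiset.map (⇑(Tuple.sort s)) Finset.univ.val = Finset.univ.val := by
      have := congrArg Finset.val (Finset.map_univ_equiv (Tuple.sort s))
      rwa [Finset.map_val] at this
    show Multiset.map s Finset.univ.val = Multiset.map (s ∘ ⇑(Tuple.sort s)) Finset.univ.val
    conv_lhs => rw [← h2]
    rw [Multiset.map_map]
  · exact Multiset.pairwise_sort _ _
  · exact (Tuple.monotone_sort s).sortedLE_ofFn.pairwise

lemma ofFn_reverse {n : ℕ} {α : Type*} (f : Fin n → α) :
    (List.ofFn f).reverse = List.ofFn (f ∘ Fin.rev) := by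
  apply List.ext_getElem
  · simp
  · intro i h1 h2
    simp only [List.length_reverse, List.length_ofFn] at h1
    rw [List.getElem_reverse, List.getElem_ofFn, List.getElem_ofFn]
    congr 1
    ext
    simp only [Fin.rev, Function.comp]
    simp [Fin.rev]
    omega

lemma topsum_eq {L K : ℕ} (hKL : K ≤ L) (s : Fin L → ℝ) :
    topsum K s = ∑ m : Fin K, s (Tuple.sort s (Fin.rev (Fin.castLE hKL m))) := by
  unfold topsum descSort
  rw [descSort_eq_ofFn, ofFn_reverse, List.sum_take_ofFn]
  rw [show Finset.univ.filter (fun j : Fin L => (j:ℕ) < K)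
        = Finset.map (Fin.castLEEmb hKL) Finset.univ from ?_]
  · rw [Finset.sum_map]
    rfl
  · ext j
    simp only [Finset.mem_filter, Finset.mem_univ, true_and, Finset.mem_map,
      Fin.castLEEmb_apply]
    constructor
    · rintro h; exact ⟨⟨j, h⟩, rfl⟩
    · rintro ⟨m, rfl⟩; exact m.isLt

lemma orderEmb_bound {K L : ℕ} (B : Finset (Fin L)) (hB : B.card = K) (m : Fin K) :
    ((B.orderEmbOfFin hB) m : ℕ) ≤ L - K + m := by
  set e := B.orderEmbOfFin hB with he
  have h1 : (Finset.Ioi m).card ≤ (Finset.Ioi (e m)).card := by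
    apply Finset.card_le_card_of_injOn e
    · intro a ha
      rw [Finset.mem_coe, Finset.mem_Ioi] at ha ⊢
      exact e.strictMono ha
    · exact e.injective.injOn
  rw [Fin.card_Ioi, Fin.card_Ioi] at h1
  have h2 := (e m).isLt
  have h3 := m.isLt
  omega

lemma sum_le_topsum {L K : ℕ} (hKL : K ≤ L) (s : Fin L → ℝ) (A : Finset (Fin L))
    (hA : A.card = K) : ∑ i ∈ A, s i ≤ topsum K s := by
  set σ := Tuple.sort s with hσ
  have hg : Monotone (s ∘ σ) := Tuple.monotone_sort s
  set B := A.image σ.symm with hBdef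
  have hB : B.card = K := by
    rw [hBdef, Finset.card_image_of_injective _ σ.symm.injective, hA]
  set e := B.orderEmbOfFin hB with he
  have hBe : B = Finset.univ.image e := by
    ext j
    simp only [Finset.mem_image, Finset.mem_univ, true_and]
    rw [show (∃ m, e m = j) ↔ j ∈ Set.range e from Iff.symm Set.mem_range.symm.symm]
    rw [Finset.range_orderEmbOfFin]
    exact ⟨fun h => h, fun h => h⟩
  have step1 : ∑ i ∈ A, s i = ∑ m : Fin K, s (σ (e m)) := by
    have e1 : ∑ i ∈ A, s i = ∑ j ∈ B, s (σ j) := by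
      rw [hBdef, Finset.sum_image (by intro x _ y _ h; exact σ.symm.injective h)]
      exact Finset.sum_congr rfl (fun i _ => by rw [Equiv.apply_symm_apply])
    rw [e1, hBe, Finset.sum_image (by intro x _ y _ h; exact e.injective h)]
  rw [step1, topsum_eq hKL s]
  rw [← Equiv.sum_comp (Fin.revPerm)
    (fun m : Fin K => s (Tuple.sort s (Fin.rev (Fin.castLE hKL m))))]
  apply Finset.sum_le_sum
  intro m _
  apply hg
  show e m ≤ Fin.rev (Fin.castLE hKL (Fin.revPerm m))
  rw [Fin.le_def, Fin.val_rev]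
  have h4 : (e m : ℕ) ≤ L - K + (m:ℕ) := orderEmb_bound B hB m
  have h3 := m.isLt
  simp only [Fin.coe_castLE, Fin.revPerm_apply, Fin.val_rev]
  omega

lemma exists_topsum {L K : ℕ} (hKL : K ≤ L) (s : Fin L → ℝ) :
    ∃ A : Finset (Fin L), A.card = K ∧ topsum K s = ∑ i ∈ A, s i := by
  set σ := Tuple.sort s
  set ψ : Fin K → Fin L := fun m => σ (Fin.rev (Fin.castLE hKL m)) with hψ
  have hinj : Function.Injective ψ := by
    intro a b h
    simp only [hψ] at h
    have := σ.injective h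
    have := Fin.rev_injective this
    exact Fin.castLE_injective hKL this
  refine ⟨Finset.univ.image ψ, ?_, ?_⟩
  · rw [Finset.card_image_of_injective _ hinj, Finset.card_univ, Fintype.card_fin]
  · rw [Finset.sum_image (fun x _ y _ h => hinj h), topsum_eq hKL s]

lemma sum_le_sqrt_norm {L K : ℕ} (A : Finset (Fin L)) (hA : A.card = K)
    (d : EuclideanSpace ℝ (Fin L)) : ∑ i ∈ A, d i ≤ Real.sqrt K * ‖d‖ := by
  have h1 : (∑ i ∈ A, d i) ^ 2 ≤ (K : ℝ) * ∑ i ∈ A, (d i) ^ 2 := by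
    have := sq_sum_le_card_mul_sum_sq (s := A) (f := fun i => d i)
    rwa [hA] at this
  have h2 : ∑ i ∈ A, (d i) ^ 2 ≤ ∑ i, (d i) ^ 2 :=
    Finset.sum_le_sum_of_subset_of_nonneg (Finset.subset_univ A)
      (fun i _ _ => sq_nonneg _)
  have h3 : ‖d‖ ^ 2 = ∑ i, (d i) ^ 2 := by
    rw [EuclideanSpace.norm_eq]
    rw [Real.sq_sqrt (by positivity)]
    simp [Real.norm_eq_abs, sq_abs]
  calc ∑ i ∈ A, d i ≤ |∑ i ∈ A, d i| := le_abs_self _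
    _ = Real.sqrt ((∑ i ∈ A, d i) ^ 2) := (Real.sqrt_sq_eq_abs _).symm
    _ ≤ Real.sqrt ((K : ℝ) * ‖d‖ ^ 2) := by
        apply Real.sqrt_le_sqrt
        calc (∑ i ∈ A, d i) ^ 2 ≤ (K : ℝ) * ∑ i ∈ A, (d i) ^ 2 := h1
          _ ≤ (K : ℝ) * ‖d‖ ^ 2 := by
              rw [h3]; exact mul_le_mul_of_nonneg_left h2 (by positivity)
    _ = Real.sqrt K * ‖d‖ := by
        rw [Real.sqrt_mul (by positivity), Real.sqrt_sq (norm_nonneg _)]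

lemma topsum_sub_le {L K : ℕ} (hKL : K ≤ L) (a b : EuclideanSpace ℝ (Fin L)) :
    topsum K a - topsum K b ≤ Real.sqrt K * ‖a - b‖ := by
  obtain ⟨A, hA, hEq⟩ := exists_topsum hKL a
  have h1 : topsum K a - topsum K b ≤ ∑ i ∈ A, a i - ∑ i ∈ A, b i := by
    have := sum_le_topsum hKL b A hA
    rw [hEq]; linarith
  rw [← Finset.sum_sub_distrib] at h1
  calc topsum K a - topsum K b ≤ ∑ i ∈ A, (a i - b i) := h1
    _ = ∑ i ∈ A, (a - b) i := by apply Finset.sum_congr rfl; intro i _; rfl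
    _ ≤ Real.sqrt K * ‖a - b‖ := sum_le_sqrt_norm A hA (a - b)

lemma abs_topsum_sub_le {L K : ℕ} (hKL : K ≤ L) (a b : EuclideanSpace ℝ (Fin L)) :
    |topsum K a - topsum K b| ≤ Real.sqrt K * ‖a - b‖ := by
  rw [abs_le]
  constructor
  · have := topsum_sub_le hKL b a
    rw [norm_sub_rev] at this
    linarith
  · exact topsum_sub_le hKL a b

lemma lipschitzWith_topsum {L K : ℕ} (hKL : K ≤ L) :
    LipschitzWith (Real.toNNReal (Real.sqrt K))
      (fun z : EuclideanSpace ℝ (Fin L) => topsum K z) := by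
  apply LipschitzWith.of_dist_le_mul
  intro a b
  rw [Real.dist_eq, dist_eq_norm, Real.coe_toNNReal _ (Real.sqrt_nonneg _)]
  exact abs_topsum_sub_le hKL a b

instance stdGaussian_isProb {L : ℕ} : IsProbabilityMeasure (stdGaussian L) :=
  Measure.isProbabilityMeasure_map (MeasurableEquiv.toLp 2 (Fin L → ℝ)).measurable.aemeasurable

lemma stdGaussian_map_eval {L : ℕ} (i : Fin L) :
    (stdGaussian L).map (fun z => z i) = gaussianReal 0 1 := by
  have hm : Measurable (fun z : EuclideanSpace ℝ (Fin L) => z i) :=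
    (measurable_pi_apply i).comp (WithLp.measurable_ofLp 2 _)
  rw [_root_.stdGaussian, Measure.map_map hm (MeasurableEquiv.toLp 2 (Fin L → ℝ)).measurable]
  show (Measure.pi (fun _ : Fin L => gaussianReal 0 1)).map (Function.eval i) = _
  classical
  rw [Measure.pi_map_eval, Finset.prod_eq_one (fun _ _ => measure_univ), one_smul]

lemma integrable_abs_gaussian : Integrable (fun x : ℝ => |x|) (gaussianReal 0 1) := by
  rw [gaussianReal_of_var_ne_zero _ one_ne_zero]
  rw [integrable_withDensity_iff (measurable_gaussianPDF _ _)
    (ae_of_all _ fun x => ENNReal.ofReal_lt_top)]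
  have : (fun x : ℝ => |x| * (gaussianPDF 0 1 x).toReal)
      = fun x : ℝ => (Real.sqrt (2 * Real.pi))⁻¹ * |x * Real.exp (-(1/2 : ℝ) * x ^ 2)| := by
    funext x
    rw [gaussianPDF, ENNReal.toReal_ofReal (gaussianPDFReal_nonneg _ _ _)]
    rw [gaussianPDFReal]
    rw [abs_mul, abs_of_nonneg (Real.exp_nonneg _)]
    have h1 : ((1 : NNReal) : ℝ) = (1 : ℝ) := rfl
    rw [h1]
    ring_nf
  rw [this]
  exact ((integrable_mul_exp_neg_mul_sq (by norm_num : (0:ℝ) < 1/2)).abs).const_mul _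

lemma integrable_eval_abs {L : ℕ} (i : Fin L) :
    Integrable (fun z : EuclideanSpace ℝ (Fin L) => |z i|) (stdGaussian L) := by
  have h := integrable_abs_gaussian
  rw [← stdGaussian_map_eval i] at h
  have hm : AEMeasurable (fun z : EuclideanSpace ℝ (Fin L) => z i) (stdGaussian L) :=
    ((measurable_pi_apply i).comp (WithLp.measurable_ofLp 2 _)).aemeasurable
  exact (integrable_map_measure h.aestronglyMeasurable hm).mp h

lemma integrable_norm_stdGaussian {L : ℕ} :
    Integrable (fun z : EuclideanSpace ℝ (Fin L) => ‖z‖) (stdGaussian L) := by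
  apply Integrable.mono' (g := fun z : EuclideanSpace ℝ (Fin L) => ∑ i, |z i|)
  · exact integrable_finset_sum _ (fun i _ => integrable_eval_abs i)
  · exact continuous_norm.aestronglyMeasurable
  · apply ae_of_all
    intro z
    rw [Real.norm_eq_abs, abs_of_nonneg (norm_nonneg _), EuclideanSpace.norm_eq]
    have h1 : ∑ i, ‖z i‖ ^ 2 ≤ (∑ i, |z i|) ^ 2 := by
      have := Finset.sum_sq_le_sq_sum_of_nonneg
        (s := Finset.univ) (f := fun i : Fin L => |z i|) (fun i _ => abs_nonneg _)
      simpa [Real.norm_eq_abs] using this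
    calc Real.sqrt (∑ i, ‖z i‖ ^ 2) ≤ Real.sqrt ((∑ i, |z i|) ^ 2) := Real.sqrt_le_sqrt h1
      _ = abs (∑ i, |z i|) := Real.sqrt_sq_eq_abs _
      _ = ∑ i, |z i| := abs_of_nonneg (Finset.sum_nonneg fun i _ => abs_nonneg _)

lemma integrable_topsum {L K : ℕ} (hKL : K ≤ L) (ε : ℝ) (s : EuclideanSpace ℝ (Fin L)) :
    Integrable (fun z : EuclideanSpace ℝ (Fin L) => topsum K (s + ε • z)) (stdGaussian L) := by
  apply Integrable.mono'
    (g := fun z : EuclideanSpace ℝ (Fin L) =>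
      |topsum K s| + (Real.sqrt K * |ε|) * ‖z‖)
  · exact (integrable_const _).add (integrable_norm_stdGaussian.const_mul _)
  · apply Continuous.aestronglyMeasurable
    exact (lipschitzWith_topsum hKL).continuous.comp
      (continuous_const.add (continuous_const_smul ε))
  · apply ae_of_all
    intro z
    rw [Real.norm_eq_abs]
    have h1 : |topsum K (s + ε • z) - topsum K s| ≤ Real.sqrt K * ‖ε • z‖ := by
      have := abs_topsum_sub_le hKL (s + ε • z) s
      simpa using this
    have h2 : ‖ε • z‖ = |ε| * ‖z‖ := by
      rw [norm_smul, Real.norm_eq_abs]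
    calc |topsum K (s + ε • z)|
        ≤ |topsum K s| + |topsum K (s + ε • z) - topsum K s| := by
          have := abs_add_le (topsum K s) (topsum K (s + ε • z) - topsum K s)
          simpa using this
      _ ≤ |topsum K s| + (Real.sqrt K * |ε|) * ‖z‖ := by
          rw [h2] at h1; linarith

/-- the smoothed top-sum `topsumSm K ε s = E[topsum K (s + ε Z)]` is well
defined (the integrand is integrable for every `s`) and `√K`-Lipschitz. -/
theorem topsumSm_integrable_and_lipschitz (L K : ℕ) (hL : 1 ≤ L) (hK1 : 1 ≤ K) (hKL : K ≤ L)
    (ε : ℝ) (hε : 0 < ε) :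
    (∀ s : EuclideanSpace ℝ (Fin L),
      Integrable (fun z : EuclideanSpace ℝ (Fin L) => topsum K (s + ε • z)) (stdGaussian L)) ∧
    LipschitzWith (Real.toNNReal (Real.sqrt K))
      (fun s : EuclideanSpace ℝ (Fin L) => topsumSm K ε s) := by
  refine ⟨fun s => integrable_topsum hKL ε s, ?_⟩
  apply LipschitzWith.of_dist_le_mul
  intro s t
  rw [Real.dist_eq, dist_eq_norm, Real.coe_toNNReal _ (Real.sqrt_nonneg _)]
  have hint_s := integrable_topsum hKL ε s
  have hint_t := integrable_topsum hKL ε t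
  have key : ∀ z : EuclideanSpace ℝ (Fin L),
      |topsum K (s + ε • z) - topsum K (t + ε • z)| ≤ Real.sqrt K * ‖s - t‖ := by
    intro z
    have := abs_topsum_sub_le hKL (s + ε • z) (t + ε • z)
    have heq : (s + ε • z) - (t + ε • z) = s - t := by abel
    rwa [heq] at this
  unfold topsumSm
  rw [← integral_sub hint_s hint_t]
  calc |∫ z, (topsum K (s + ε • z) - topsum K (t + ε • z)) ∂(stdGaussian L)|
      ≤ ∫ z, |topsum K (s + ε • z) - topsum K (t + ε • z)| ∂(stdGaussian L) := by
        have := norm_integral_le_integral_norm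
          (f := fun z : EuclideanSpace ℝ (Fin L) =>
            topsum K (s + ε • z) - topsum K (t + ε • z)) (μ := stdGaussian L)
        simpa [Real.norm_eq_abs] using this
    _ ≤ ∫ _z, Real.sqrt K * ‖s - t‖ ∂(stdGaussian L) := by
        apply integral_mono (hint_s.sub hint_t).abs (integrable_const _)
        exact key
    _ = Real.sqrt K * ‖s - t‖ := by
        rw [integral_const]
        simp
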